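/- arXiv:2309.11744 — 4 statements merged into one kernel-verified Lean document; each statement's English description precedes it below -/
import Mathlib

section
/- Let P and Q be probability measures on a measurable space S, let π be a finite measure on S with π(S) > 0, and suppose P(A) ≥ π(A) and Q(A) ≥ π(A) for all measurable A. Then for any bounded measurable function h : S → ℝ, |∫ h dP − ∫ h dQ| ≤ ‖h‖_sp · (1 − π(S)), where ‖h‖_sp = sup h − inf h is the span seminorm. -/
open MeasureTheory

lemma aux_int_le {S : Type*} [MeasurableSpace S] [Nonempty S] (μ : Measure S)
    [IsFiniteMeasure μ] {h : S → ℝ} (hmeas : Measurable h) {C : ℝ} (hC : ∀ x, |h x| ≤ C) :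
    (⨅ x, h x) * (μ Set.univ).toReal ≤ ∫ x, h x ∂μ ∧
      ∫ x, h x ∂μ ≤ (⨆ x, h x) * (μ Set.univ).toReal := by
  have hbA : BddAbove (Set.range h) := ⟨C, by rintro _ ⟨x, rfl⟩; exact (abs_le.1 (hC x)).2⟩
  have hbB : BddBelow (Set.range h) := ⟨-C, by rintro _ ⟨x, rfl⟩; exact (abs_le.1 (hC x)).1⟩
  have hint : Integrable h μ :=
    (integrable_const C).mono' hmeas.aestronglyMeasurable (Filter.Eventually.of_forall hC)
  constructor
  · calc (⨅ x, h x) * (μ Set.univ).toReal = ∫ _, (⨅ x, h x) ∂μ := by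
          rw [integral_const, smul_eq_mul, measureReal_def]; ring
      _ ≤ ∫ x, h x ∂μ :=
          integral_mono (integrable_const _) hint (fun x => ciInf_le hbB x)
  · calc ∫ x, h x ∂μ ≤ ∫ _, (⨆ x, h x) ∂μ :=
          integral_mono hint (integrable_const _) (fun x => le_ciSup hbA x)
      _ = (⨆ x, h x) * (μ Set.univ).toReal := by rw [integral_const, smul_eq_mul, measureReal_def]; ring

/-- If `P` and `Q` are probability measures both minorized by a nontrivial finite measure `π`,
then for any bounded measurable `h`,
`|∫ h dP − ∫ h dQ| ≤ ‖h‖_sp · (1 − π(S))`, where `‖h‖_sp = sup h − inf h`. -/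
theorem integral_diff_le_spanSeminorm_of_minorization
    {S : Type*} [MeasurableSpace S] [Nonempty S]
    (P Q π : Measure S) [IsProbabilityMeasure P] [IsProbabilityMeasure Q]
    [IsFiniteMeasure π] (hπpos : 0 < π Set.univ)
    (hP : ∀ A : Set S, MeasurableSet A → π A ≤ P A)
    (hQ : ∀ A : Set S, MeasurableSet A → π A ≤ Q A)
    (h : S → ℝ) (hmeas : Measurable h) (hbdd : ∃ C, ∀ x, |h x| ≤ C) :
    |(∫ x, h x ∂P) - ∫ x, h x ∂Q| ≤
      ((⨆ x, h x) - ⨅ x, h x) * (1 - (π Set.univ).toReal) := by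
  obtain ⟨C, hC⟩ := hbdd
  have hPle : π ≤ P := Measure.le_iff.2 hP
  have hQle : π ≤ Q := Measure.le_iff.2 hQ
  have hint : ∀ (ρ : Measure S) [IsFiniteMeasure ρ], Integrable h ρ := fun ρ _ =>
    (integrable_const C).mono' hmeas.aestronglyMeasurable (Filter.Eventually.of_forall hC)
  have key : ∀ (ρ : Measure S) [IsProbabilityMeasure ρ], π ≤ ρ →
      ∫ x, h x ∂ρ = (∫ x, h x ∂(ρ - π)) + ∫ x, h x ∂π := by
    intro ρ _ hle
    conv_lhs => rw [← Measure.sub_add_cancel_of_le hle]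
    exact integral_add_measure (hint _) (hint _)
  have huniv : ∀ (ρ : Measure S) [IsProbabilityMeasure ρ], π ≤ ρ →
      ((ρ - π) Set.univ).toReal = 1 - (π Set.univ).toReal := by
    intro ρ _ hle
    rw [Measure.sub_apply MeasurableSet.univ hle,
      ENNReal.toReal_sub_of_le (hle Set.univ) (measure_ne_top ρ _), measure_univ,
      ENNReal.toReal_one]
  have hBP := aux_int_le (P - π) hmeas hC
  have hBQ := aux_int_le (Q - π) hmeas hC
  rw [huniv P hPle] at hBP
  rw [huniv Q hQle] at hBQ
  rw [key P hPle, key Q hQle]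
  have habs : ∀ a b c d : ℝ, a + c - (b + c) = a - b := by intros; ring
  rw [habs _ _ _ 0, abs_sub_le_iff]
  constructor <;> [skip; rw [mul_comm ((⨆ x, h x) - ⨅ x, h x)]] <;> nlinarith [hBP.1, hBP.2, hBQ.1, hBQ.2]
end

section
/- Verification theorem for average cost: let (Z, 𝒰, η, k) be a Markov decision process with bounded measurable stage cost k, and suppose there exist a bounded measurable function h : Z → ℝ and a constant j* satisfying the average cost optimality equation j* + h(z) = inf_{a ∈ U(z)} ( k(z,a) + ∫ h(z₁) η(dz₁ | z, a) ) for all z ∈ Z. Then for every initial state z and every admissible policy g, the long-run average cost limsup_{T→∞} (1/T) Σ_{t=0}^{T−1} E_z^g[k(z_t, a_t)] is at least j*. -/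
open MeasureTheory Filter

/-- Verification theorem (lower bound) for average cost MDPs: if a bounded measurable
function `h` and a constant `j*` satisfy the average cost optimality equation
`j* + h(z) = inf_{a ∈ U(z)} ( k(z,a) + ∫ h dη(·|z,a) )`,
then for every admissible state-action process (any policy), the long-run average cost
`limsup_T (1/T) Σ_{t<T} E[k(z_t,a_t)]` is at least `j*`. -/
theorem acoe_verification_lower_bound
    {Z A Ω : Type*} [MeasurableSpace Z] [MeasurableSpace A] [MeasurableSpace Ω]
    (U : Z → Set A)
    (η : Z → A → Measure Z) [∀ z a, IsProbabilityMeasure (η z a)]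
    (hηm : Measurable fun p : Z × A => η p.1 p.2)
    (k : Z → A → ℝ) (hkm : Measurable fun p : Z × A => k p.1 p.2)
    (hkb : ∃ C, ∀ z a, |k z a| ≤ C)
    (h : Z → ℝ) (hhm : Measurable h) (hhb : ∃ C, ∀ z, |h z| ≤ C)
    (jstar : ℝ)
    (hacoe : ∀ z : Z,
      jstar + h z = sInf ((fun a => k z a + ∫ y, h y ∂ η z a) '' U z))
    -- an admissible controlled process under an arbitrary (possibly history-dependent,
    -- randomized) policy, starting from any initial state distribution:
    (μ : Measure Ω) [IsProbabilityMeasure μ]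
    (zs : ℕ → Ω → Z) (as : ℕ → Ω → A)
    (hzm : ∀ t, Measurable (zs t)) (ham : ∀ t, Measurable (as t))
    (hadm : ∀ t ω, as t ω ∈ U (zs t ω))
    (hdrift : ∀ t : ℕ,
      (∫ ω, h (zs (t + 1) ω) ∂μ) = ∫ ω, (∫ y, h y ∂ η (zs t ω) (as t ω)) ∂μ) :
    jstar ≤ limsup (fun T : ℕ =>
      (1 / (T : ℝ)) * ∑ t ∈ Finset.range T, ∫ ω, k (zs t ω) (as t ω) ∂μ) atTop := by
  classical
  obtain ⟨Ck, hCk⟩ := hkb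
  obtain ⟨Ch, hCh⟩ := hhb
  have hΩ : Nonempty Ω := by
    rcases isEmpty_or_nonempty Ω with hE | hN
    · have h1 : μ Set.univ = 1 := measure_univ
      rw [Set.univ_eq_empty_iff.mpr hE] at h1
      simp at h1
    · exact hN
  obtain ⟨ω₀⟩ := hΩ
  have hCh0 : 0 ≤ Ch := (abs_nonneg _).trans (hCh (zs 0 ω₀))
  have hCk0 : 0 ≤ Ck := (abs_nonneg _).trans (hCk (zs 0 ω₀) (as 0 ω₀))
  -- |∫ h dη z a| ≤ Ch
  have hIη : ∀ z a, |∫ y, h y ∂ η z a| ≤ Ch := by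
    intro z a
    have := norm_integral_le_of_norm_le_const (μ := η z a) (C := Ch)
      (Eventually.of_forall fun y => by rw [Real.norm_eq_abs]; exact hCh y)
    rw [Real.norm_eq_abs] at this
    simpa using this
  -- pointwise inequality from the ACOE
  have hpt : ∀ z a, a ∈ U z → jstar + h z ≤ k z a + ∫ y, h y ∂ η z a := by
    intro z a ha
    rw [hacoe z]
    refine csInf_le ⟨-(Ck + Ch), ?_⟩ ⟨a, ha, rfl⟩
    rintro x ⟨b, _, rfl⟩
    have h1 := (abs_le.mp (hCk z b)).1
    have h2 := (abs_le.mp (hIη z b)).1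
    show -(Ck + Ch) ≤ k z b + ∫ y, h y ∂ η z b
    linarith
  -- integrability helper
  have intOf : ∀ (f : Ω → ℝ), AEStronglyMeasurable f μ → ∀ C : ℝ, (∀ ω, |f ω| ≤ C) →
      Integrable f μ := by
    intro f hf C hb
    exact (integrable_const C).mono' hf
      (Eventually.of_forall fun ω => by simpa [Real.norm_eq_abs] using hb ω)
  -- measurability of the kernel integral
  let κ : ProbabilityTheory.Kernel (Z × A) Z := ⟨fun p => η p.1 p.2, hηm⟩
  haveI : ProbabilityTheory.IsMarkovKernel κ :=
    ⟨fun p => inferInstanceAs (IsProbabilityMeasure (η p.1 p.2))⟩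
  have hκint : StronglyMeasurable fun p : Z × A => ∫ y, h y ∂ η p.1 p.2 := by
    have hf : StronglyMeasurable fun p : (Z × A) × Z => h p.2 :=
      (hhm.comp measurable_snd).stronglyMeasurable
    exact hf.integral_kernel_prod_right' (κ := κ)
  have hk_int : ∀ t, Integrable (fun ω => k (zs t ω) (as t ω)) μ := fun t =>
    intOf _ (hkm.comp ((hzm t).prodMk (ham t))).aestronglyMeasurable Ck
      (fun ω => hCk _ _)
  have hh_int : ∀ t, Integrable (fun ω => h (zs t ω)) μ := fun t =>
    intOf _ (hhm.comp (hzm t)).aestronglyMeasurable Ch (fun ω => hCh _)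
  have hη_int : ∀ t, Integrable (fun ω => ∫ y, h y ∂ η (zs t ω) (as t ω)) μ := fun t =>
    intOf _ ((hκint.comp_measurable ((hzm t).prodMk (ham t))).aestronglyMeasurable) Ch
      (fun ω => hIη _ _)
  -- one step inequality
  have key : ∀ t, jstar + ∫ ω, h (zs t ω) ∂μ ≤
      (∫ ω, k (zs t ω) (as t ω) ∂μ) + ∫ ω, h (zs (t + 1) ω) ∂μ := by
    intro t
    rw [hdrift t]
    have h1 : (∫ ω, (jstar + h (zs t ω)) ∂μ) ≤
        ∫ ω, (k (zs t ω) (as t ω) + ∫ y, h y ∂ η (zs t ω) (as t ω)) ∂μ := by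
      refine integral_mono ((integrable_const jstar).add (hh_int t))
        ((hk_int t).add (hη_int t)) fun ω => ?_
      exact hpt _ _ (hadm t ω)
    rwa [integral_add (integrable_const jstar) (hh_int t),
      integral_add (hk_int t) (hη_int t), integral_const, probReal_univ,
      smul_eq_mul, one_mul] at h1
  -- telescoping sum
  have sum_ineq : ∀ T : ℕ, T * jstar + ∫ ω, h (zs 0 ω) ∂μ ≤
      (∑ t ∈ Finset.range T, ∫ ω, k (zs t ω) (as t ω) ∂μ) + ∫ ω, h (zs T ω) ∂μ := by
    intro T
    induction T with
    | zero => simp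
    | succ T ih =>
      have := key T
      rw [Finset.sum_range_succ]
      push_cast
      linarith
  -- bound on ∫ h(zs t)
  have hIb : ∀ t, |∫ ω, h (zs t ω) ∂μ| ≤ Ch := by
    intro t
    have := norm_integral_le_of_norm_le_const (μ := μ) (C := Ch)
      (Eventually.of_forall fun ω => by rw [Real.norm_eq_abs]; exact hCh (zs t ω))
    rw [Real.norm_eq_abs] at this
    simpa using this
  set f : ℕ → ℝ := fun T =>
    (1 / (T : ℝ)) * ∑ t ∈ Finset.range T, ∫ ω, k (zs t ω) (as t ω) ∂μ with hf
  set g : ℕ → ℝ := fun T => jstar - 2 * Ch / T with hg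
  have hkI : ∀ t, |∫ ω, k (zs t ω) (as t ω) ∂μ| ≤ Ck := by
    intro t
    have := norm_integral_le_of_norm_le_const (μ := μ) (C := Ck)
      (Eventually.of_forall fun ω => by rw [Real.norm_eq_abs]; exact hCk (zs t ω) (as t ω))
    rw [Real.norm_eq_abs] at this
    simpa using this
  have hfg : ∀ T : ℕ, 1 ≤ T → g T ≤ f T := by
    intro T hT
    have hTpos : (0 : ℝ) < T := by exact_mod_cast hT
    have hsum : (T : ℝ) * jstar - 2 * Ch ≤
        ∑ t ∈ Finset.range T, ∫ ω, k (zs t ω) (as t ω) ∂μ := by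
      have h0 := (abs_le.mp (hIb 0)).1
      have hT' := (abs_le.mp (hIb T)).2
      have := sum_ineq T
      linarith
    show jstar - 2 * Ch / (T : ℝ) ≤
        (1 / (T : ℝ)) * ∑ t ∈ Finset.range T, ∫ ω, k (zs t ω) (as t ω) ∂μ
    calc jstar - 2 * Ch / (T : ℝ)
        = (1 / (T : ℝ)) * ((T : ℝ) * jstar - 2 * Ch) := by field_simp
      _ ≤ (1 / (T : ℝ)) * ∑ t ∈ Finset.range T, ∫ ω, k (zs t ω) (as t ω) ∂μ :=
          mul_le_mul_of_nonneg_left hsum (by positivity)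
  have hgf : g ≤ᶠ[atTop] f := eventually_atTop.mpr ⟨1, hfg⟩
  -- f is bounded above
  have hfb : ∀ T, f T ≤ Ck := by
    intro T
    rcases Nat.eq_zero_or_pos T with rfl | hT
    · simpa [hf] using hCk0
    have hTpos : (0 : ℝ) < T := by exact_mod_cast hT
    have hsum : ∑ t ∈ Finset.range T, ∫ ω, k (zs t ω) (as t ω) ∂μ ≤ T * Ck := by
      calc ∑ t ∈ Finset.range T, ∫ ω, k (zs t ω) (as t ω) ∂μ
          ≤ ∑ t ∈ Finset.range T, Ck :=
            Finset.sum_le_sum fun t _ => (abs_le.mp (hkI t)).2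
        _ = T * Ck := by simp [mul_comm]
    show (1 / (T : ℝ)) * ∑ t ∈ Finset.range T, ∫ ω, k (zs t ω) (as t ω) ∂μ ≤ Ck
    calc (1 / (T : ℝ)) * ∑ t ∈ Finset.range T, ∫ ω, k (zs t ω) (as t ω) ∂μ
        ≤ (1 / (T : ℝ)) * ((T : ℝ) * Ck) :=
          mul_le_mul_of_nonneg_left hsum (by positivity)
      _ = Ck := by field_simp
  have hfbdd : IsBoundedUnder (· ≤ ·) atTop f :=
    isBoundedUnder_of ⟨Ck, hfb⟩
  -- g tends to jstar
  have hgt : Tendsto g atTop (nhds jstar) := by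
    have h1 : Tendsto (fun T : ℕ => 2 * Ch / (T : ℝ)) atTop (nhds 0) := by
      simpa [div_eq_mul_inv] using (tendsto_natCast_atTop_atTop (R := ℝ)).inv_tendsto_atTop.const_mul (2 * Ch)
    have := (tendsto_const_nhds (x := jstar) (f := atTop (α := ℕ))).sub h1
    simpa [hg] using this
  have hgls : limsup g atTop = jstar := hgt.limsup_eq
  have hgcb : IsCoboundedUnder (· ≤ ·) atTop g := hgt.isCoboundedUnder_le
  calc jstar = limsup g atTop := hgls.symm
    _ ≤ limsup f atTop := limsup_le_limsup hgf hgcb hfbdd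
end

section
/- Verification theorem (achievability): in the setting of the average cost optimality equation j* + h(z) = inf_{a∈U(z)} ( k(z,a) + ∫ h(z₁) η(dz₁|z,a) ) with h bounded measurable and j* constant, if a stationary Markov policy g* attains the infimum for every z, i.e. j* + h(z) = k(z, g*(z)) + ∫ h(z₁) η(dz₁ | z, g*(z)), then the long-run average cost of g* from any initial state equals j*, and hence g* is average-cost optimal. -/
open MeasureTheory Filter Topology

private lemma integrable_of_bdd' {Ω : Type*} [MeasurableSpace Ω] {μ : Measure Ω}
    [IsProbabilityMeasure μ] {f : Ω → ℝ} (hf : Measurable f) {C : ℝ}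
    (hC : ∀ ω, |f ω| ≤ C) : Integrable f μ :=
  ⟨hf.aestronglyMeasurable, HasFiniteIntegral.of_bounded (C := C) (ae_of_all _ hC)⟩

private lemma abs_integral_le' {Ω : Type*} [MeasurableSpace Ω] {μ : Measure Ω}
    [IsProbabilityMeasure μ] {f : Ω → ℝ} {C : ℝ} (hC : ∀ ω, |f ω| ≤ C) :
    |∫ ω, f ω ∂μ| ≤ C := by
  have := norm_integral_le_of_norm_le_const (μ := μ) (f := f) (C := C) (ae_of_all _ hC)
  simpa using this

/-- Verification theorem (achievability): if `(j*, h)` solves the ACOE and a stationary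
Markov policy `g*` attains the infimum for every state, then the long-run average cost
of `g*` from any initial state equals `j*`; hence `g*` is average-cost optimal (its
average cost is at most that of any admissible process). -/
theorem acoe_verification_achievability
    {Z A Ω : Type*} [MeasurableSpace Z] [MeasurableSpace A] [MeasurableSpace Ω]
    (U : Z → Set A)
    (η : Z → A → Measure Z) [∀ z a, IsProbabilityMeasure (η z a)]
    (hηm : Measurable fun p : Z × A => η p.1 p.2)
    (k : Z → A → ℝ) (hkm : Measurable fun p : Z × A => k p.1 p.2)
    (hkb : ∃ C, ∀ z a, |k z a| ≤ C)
    (h : Z → ℝ) (hhm : Measurable h) (hhb : ∃ C, ∀ z, |h z| ≤ C)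
    (jstar : ℝ)
    (hacoe : ∀ z : Z,
      jstar + h z = sInf ((fun a => k z a + ∫ y, h y ∂ η z a) '' U z))
    -- the stationary Markov policy attaining the infimum:
    (gstar : Z → A) (hgm : Measurable gstar) (hgU : ∀ z, gstar z ∈ U z)
    (hattain : ∀ z, jstar + h z = k z (gstar z) + ∫ y, h y ∂ η z (gstar z))
    -- the process induced by `g*` from an arbitrary initial state distribution:
    (μ : Measure Ω) [IsProbabilityMeasure μ]
    (zs : ℕ → Ω → Z) (hzm : ∀ t, Measurable (zs t))
    (hdrift : ∀ t : ℕ,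
      (∫ ω, h (zs (t + 1) ω) ∂μ) =
        ∫ ω, (∫ y, h y ∂ η (zs t ω) (gstar (zs t ω))) ∂μ) :
    limsup (fun T : ℕ =>
        (1 / (T : ℝ)) * ∑ t ∈ Finset.range T, ∫ ω, k (zs t ω) (gstar (zs t ω)) ∂μ)
      atTop = jstar ∧
    -- optimality: any admissible process has average cost at least that of `g*`
    (∀ (Ω' : Type) (_ : MeasurableSpace Ω') (μ' : Measure Ω'),
      IsProbabilityMeasure μ' →
      ∀ (zs' : ℕ → Ω' → Z) (as' : ℕ → Ω' → A),
        (∀ t, Measurable (zs' t)) → (∀ t, Measurable (as' t)) →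
        (∀ t ω, as' t ω ∈ U (zs' t ω)) →
        (∀ t : ℕ, (∫ ω, h (zs' (t + 1) ω) ∂μ') =
          ∫ ω, (∫ y, h y ∂ η (zs' t ω) (as' t ω)) ∂μ') →
        limsup (fun T : ℕ =>
            (1 / (T : ℝ)) * ∑ t ∈ Finset.range T,
              ∫ ω, k (zs t ω) (gstar (zs t ω)) ∂μ) atTop ≤
          limsup (fun T : ℕ =>
            (1 / (T : ℝ)) * ∑ t ∈ Finset.range T,
              ∫ ω, k (zs' t ω) (as' t ω) ∂μ') atTop) := by
  obtain ⟨Ck, hCk⟩ := hkb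
  obtain ⟨Ch, hCh⟩ := hhb
  -- nonemptiness and sign facts
  have hΩ : Nonempty Ω := by
    by_contra hc
    rw [not_nonempty_iff] at hc
    have h1 : μ Set.univ = 1 := measure_univ
    rw [Set.univ_eq_empty_iff.mpr hc, measure_empty] at h1
    exact zero_ne_one h1
  have hCh0 : 0 ≤ Ch := (abs_nonneg _).trans (hCh (zs 0 hΩ.some))
  have hCk0 : 0 ≤ Ck :=
    (abs_nonneg _).trans (hCk (zs 0 hΩ.some) (gstar (zs 0 hΩ.some)))
  -- measurability of the drift integral
  set κ : ProbabilityTheory.Kernel (Z × A) Z := ⟨fun p => η p.1 p.2, hηm⟩ with hκ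
  haveI : ProbabilityTheory.IsMarkovKernel κ :=
    ⟨fun p => inferInstanceAs (IsProbabilityMeasure (η p.1 p.2))⟩
  have Hintm : Measurable fun p : Z × A => ∫ y, h y ∂ η p.1 p.2 := by
    have hsm : StronglyMeasurable fun p : (Z × A) × Z => h p.2 :=
      (hhm.comp measurable_snd).stronglyMeasurable
    exact (hsm.integral_kernel_prod_right' (κ := κ)).measurable
  have Hintb : ∀ z a, |∫ y, h y ∂ η z a| ≤ Ch := fun z a =>
    abs_integral_le' (μ := η z a) hCh
  -- pointwise inequality from the ACOE
  have hlow : ∀ z a, a ∈ U z → jstar + h z ≤ k z a + ∫ y, h y ∂ η z a := by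
    intro z a ha
    rw [hacoe z]
    refine csInf_le ⟨-(Ck + Ch), ?_⟩ ⟨a, ha, rfl⟩
    rintro x ⟨a', _, rfl⟩
    have h1 := (abs_le.1 (hCk z a')).1
    have h2 := (abs_le.1 (Hintb z a')).1
    simp only [neg_add]
    linarith
  -- Part 1: per-step equality
  set Eh : ℕ → ℝ := fun t => ∫ ω, h (zs t ω) ∂μ with hEh
  set Ek : ℕ → ℝ := fun t => ∫ ω, k (zs t ω) (gstar (zs t ω)) ∂μ with hEk
  have hEhb : ∀ t, |Eh t| ≤ Ch := fun t => abs_integral_le' (fun ω => hCh _)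
  have step_eq : ∀ t, Ek t = jstar + (Eh t - Eh (t + 1)) := by
    intro t
    have hmz : Measurable fun ω => (zs t ω, gstar (zs t ω)) :=
      (hzm t).prodMk (hgm.comp (hzm t))
    have hkint : Integrable (fun ω => k (zs t ω) (gstar (zs t ω))) μ :=
      integrable_of_bdd' (hkm.comp hmz) fun ω => hCk _ _
    have hhint : Integrable (fun ω => h (zs t ω)) μ :=
      integrable_of_bdd' (hhm.comp (hzm t)) fun ω => hCh _
    have hjh : Integrable (fun ω => jstar + h (zs t ω)) μ :=
      integrable_of_bdd' (measurable_const.add (hhm.comp (hzm t)))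
        (C := |jstar| + Ch) fun ω => (abs_add_le _ _).trans (by linarith [hCh (zs t ω)])
    have key : (∫ ω, h (zs (t + 1) ω) ∂μ)
        = jstar + (∫ ω, h (zs t ω) ∂μ) - ∫ ω, k (zs t ω) (gstar (zs t ω)) ∂μ := by
      rw [hdrift t]
      have hpt : (fun ω => ∫ y, h y ∂ η (zs t ω) (gstar (zs t ω))) =
          fun ω => jstar + h (zs t ω) - k (zs t ω) (gstar (zs t ω)) := by
        funext ω
        have := hattain (zs t ω)
        linarith
      rw [hpt, integral_sub hjh hkint, integral_add (integrable_const jstar) hhint,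
        integral_const]
      simp
    simp only [hEk, hEh]
    linarith
  have sum_eq : ∀ T : ℕ, ∑ t ∈ Finset.range T, Ek t = T * jstar + (Eh 0 - Eh T) := by
    intro T
    calc ∑ t ∈ Finset.range T, Ek t
        = ∑ t ∈ Finset.range T, (jstar + (Eh t - Eh (t + 1))) :=
          Finset.sum_congr rfl fun t _ => step_eq t
      _ = T * jstar + (Eh 0 - Eh T) := by
          rw [Finset.sum_add_distrib, Finset.sum_const, Finset.sum_range_sub' Eh,
            Finset.card_range, nsmul_eq_mul]
  have havg : Tendsto (fun T : ℕ => (1 / (T : ℝ)) * ∑ t ∈ Finset.range T, Ek t)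
      atTop (𝓝 jstar) := by
    have hdiff0 : Tendsto (fun T : ℕ => (Eh 0 - Eh T) / T) atTop (𝓝 0) := by
      refine squeeze_zero_norm' ?_ (tendsto_const_div_atTop_nhds_zero_nat (2 * Ch))
      filter_upwards [eventually_ge_atTop 1] with T hT
      have hT0 : (0 : ℝ) < T := by exact_mod_cast hT
      rw [Real.norm_eq_abs, abs_div, Nat.abs_cast]
      have h1 := abs_sub (Eh 0) (Eh T)
      have h2 : |Eh 0 - Eh T| ≤ 2 * Ch := by
        have := hEhb 0; have := hEhb T
        have := abs_sub_abs_le_abs_sub (Eh 0) (Eh T)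
        calc |Eh 0 - Eh T| ≤ |Eh 0| + |Eh T| := abs_sub _ _
          _ ≤ 2 * Ch := by linarith [hEhb 0, hEhb T]
      exact div_le_div_of_nonneg_right h2 hT0.le
    have h1 : Tendsto (fun T : ℕ => jstar + (Eh 0 - Eh T) / T) atTop (𝓝 jstar) := by
      simpa using tendsto_const_nhds.add hdiff0
    refine h1.congr' ?_
    filter_upwards [eventually_ge_atTop 1] with T hT
    have hT0 : (T : ℝ) ≠ 0 := by positivity
    rw [sum_eq T]
    field_simp
  refine ⟨havg.limsup_eq, ?_⟩
  -- Part 2: optimality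
  intro Ω' _ μ' hμ' zs' as' hzm' ham' hU' hdrift'
  haveI := hμ'
  rw [havg.limsup_eq]
  set Eh' : ℕ → ℝ := fun t => ∫ ω, h (zs' t ω) ∂μ' with hEh'
  set Ek' : ℕ → ℝ := fun t => ∫ ω, k (zs' t ω) (as' t ω) ∂μ' with hEk'
  have hEhb' : ∀ t, |Eh' t| ≤ Ch := fun t => abs_integral_le' (fun ω => hCh _)
  have hEkb' : ∀ t, |Ek' t| ≤ Ck := fun t => abs_integral_le' (fun ω => hCk _ _)
  have step_ge : ∀ t, jstar + (Eh' t - Eh' (t + 1)) ≤ Ek' t := by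
    intro t
    have hmz : Measurable fun ω => (zs' t ω, as' t ω) := (hzm' t).prodMk (ham' t)
    have hkint : Integrable (fun ω => k (zs' t ω) (as' t ω)) μ' :=
      integrable_of_bdd' (hkm.comp hmz) fun ω => hCk _ _
    have hhint : Integrable (fun ω => h (zs' t ω)) μ' :=
      integrable_of_bdd' (hhm.comp (hzm' t)) fun ω => hCh _
    have hFint : Integrable (fun ω => ∫ y, h y ∂ η (zs' t ω) (as' t ω)) μ' :=
      integrable_of_bdd' (Hintm.comp hmz) fun ω => Hintb _ _
    have hjh : Integrable (fun ω => jstar + h (zs' t ω)) μ' :=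
      integrable_of_bdd' (measurable_const.add (hhm.comp (hzm' t)))
        (C := |jstar| + Ch) fun ω => (abs_add_le _ _).trans (by linarith [hCh (zs' t ω)])
    have hGint : Integrable (fun ω => jstar + h (zs' t ω) - k (zs' t ω) (as' t ω)) μ' :=
      hjh.sub hkint
    have hmono : (∫ ω, (jstar + h (zs' t ω) - k (zs' t ω) (as' t ω)) ∂μ')
        ≤ ∫ ω, (∫ y, h y ∂ η (zs' t ω) (as' t ω)) ∂μ' := by
      refine integral_mono hGint hFint fun ω => ?_
      have := hlow (zs' t ω) (as' t ω) (hU' t ω)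
      linarith
    rw [integral_sub hjh hkint, integral_add (integrable_const jstar) hhint,
      integral_const, ← hdrift' t] at hmono
    simp only [hEk', hEh']
    simp at hmono
    linarith
  have sum_ge : ∀ T : ℕ, T * jstar + (Eh' 0 - Eh' T) ≤ ∑ t ∈ Finset.range T, Ek' t := by
    intro T
    calc (T : ℝ) * jstar + (Eh' 0 - Eh' T)
        = ∑ t ∈ Finset.range T, (jstar + (Eh' t - Eh' (t + 1))) := by
          rw [Finset.sum_add_distrib, Finset.sum_const, Finset.sum_range_sub' Eh',
            Finset.card_range, nsmul_eq_mul]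
      _ ≤ ∑ t ∈ Finset.range T, Ek' t := Finset.sum_le_sum fun t _ => step_ge t
  have hl : Tendsto (fun T : ℕ => jstar - 2 * Ch / T) atTop (𝓝 jstar) := by
    simpa using tendsto_const_nhds.sub (tendsto_const_div_atTop_nhds_zero_nat (2 * Ch))
  rw [← hl.limsup_eq]
  refine limsup_le_limsup ?_ hl.isCoboundedUnder_le ⟨Ck, ?_⟩
  · filter_upwards [eventually_ge_atTop 1] with T hT
    have hT0 : (0 : ℝ) < T := by exact_mod_cast hT
    have h2 : |Eh' 0 - Eh' T| ≤ 2 * Ch := by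
      calc |Eh' 0 - Eh' T| ≤ |Eh' 0| + |Eh' T| := abs_sub _ _
        _ ≤ 2 * Ch := by linarith [hEhb' 0, hEhb' T]
    have h3 : jstar - 2 * Ch / T ≤ jstar + (Eh' 0 - Eh' T) / T := by
      have h4 : -(2 * Ch) / T ≤ (Eh' 0 - Eh' T) / T :=
        div_le_div_of_nonneg_right (by linarith [(abs_le.1 h2).1]) hT0.le
      rw [neg_div] at h4
      linarith
    refine h3.trans ?_
    have h5 : jstar + (Eh' 0 - Eh' T) / T = (1 / T) * (T * jstar + (Eh' 0 - Eh' T)) := by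
      field_simp
    rw [h5]
    exact mul_le_mul_of_nonneg_left (sum_ge T) (by positivity)
  · refine eventually_map.2 (Eventually.of_forall fun T => ?_)
    rcases Nat.eq_zero_or_pos T with hT | hT
    · simp [hT, hCk0]
    · have hT0 : (0 : ℝ) < T := by exact_mod_cast hT
      have hsum : ∑ t ∈ Finset.range T, Ek' t ≤ T * Ck := by
        calc ∑ t ∈ Finset.range T, Ek' t ≤ ∑ t ∈ Finset.range T, Ck :=
              Finset.sum_le_sum fun t _ => (abs_le.1 (hEkb' t)).2
          _ = T * Ck := by rw [Finset.sum_const, Finset.card_range, nsmul_eq_mul]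
      calc (1 / (T : ℝ)) * ∑ t ∈ Finset.range T, Ek' t
          ≤ (1 / (T : ℝ)) * (T * Ck) := mul_le_mul_of_nonneg_left hsum (by positivity)
        _ = Ck := by field_simp
end

section
/- Passing the Bellman equation to the limit: suppose for each k, h_k : M → ℝ satisfies h_k(m) = inf_{a ∈ A(m)} ( c(m,a) + β_k ∫ h_k dη(·|m,a) ) − r_k, where β_k → 1, r_k → j*, h_k → h uniformly, each A(m) is compact, c is continuous and bounded, and η is weakly continuous in (m,a) and h is continuous. Then h satisfies h(m) = inf_{a∈A(m)} ( c(m,a) + ∫ h dη(·|m,a) ) − j* for all m ∈ M. -/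
open MeasureTheory Filter

lemma csInf_image_le_add {A : Type*} {S : Set A} (hS : S.Nonempty) {f g : A → ℝ}
    (hf : BddBelow (f '' S)) {δ : ℝ} (hle : ∀ a ∈ S, f a ≤ g a + δ) :
    sInf (f '' S) ≤ sInf (g '' S) + δ := by
  rw [← sub_le_iff_le_add]
  apply le_csInf (hS.image g)
  rintro b ⟨a, ha, rfl⟩
  have h1 : sInf (f '' S) ≤ f a := csInf_le hf ⟨a, ha, rfl⟩
  linarith [hle a ha]

lemma abs_csInf_sub_csInf_le {A : Type*} {S : Set A} (hS : S.Nonempty) {f g : A → ℝ}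
    (hf : BddBelow (f '' S)) (hg : BddBelow (g '' S)) {δ : ℝ}
    (hle : ∀ a ∈ S, |f a - g a| ≤ δ) :
    |sInf (f '' S) - sInf (g '' S)| ≤ δ := by
  rw [abs_le]
  constructor
  · have := csInf_image_le_add hS hg (δ := δ) (f := g) (g := f) (fun a ha => by
      have := abs_le.mp (hle a ha); linarith [this.1])
    linarith
  · have := csInf_image_le_add hS hf (δ := δ) (fun a ha => by
      have := abs_le.mp (hle a ha); linarith [this.2])
    linarith

/-- Passing the Bellman equation to the limit: if `h_k` satisfies the `β_k`-discounted
relative Bellman equation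
`h_k(m) = inf_{a∈A(m)} ( c(m,a) + β_k ∫ h_k dη(·|m,a) ) − r_k`,
with `β_k → 1`, `r_k → j*`, `h_k → h` uniformly, compact admissible sets, continuous
bounded cost, weakly continuous kernel, and `h` continuous, then `h` satisfies the ACOE
`h(m) = inf_{a∈A(m)} ( c(m,a) + ∫ h dη(·|m,a) ) − j*`. -/
theorem bellman_equation_limit
    {M A : Type*} [MetricSpace M] [CompactSpace M] [MeasurableSpace M] [BorelSpace M]
    [MetricSpace A]
    (Act : M → Set A) (hActne : ∀ m, (Act m).Nonempty)
    (hActcpt : ∀ m, IsCompact (Act m))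
    (c : M × A → ℝ) (hc : Continuous c) (hcb : ∃ C, ∀ p, |c p| ≤ C)
    (η : M × A → Measure M) [∀ p, IsProbabilityMeasure (η p)]
    (hη : ∀ f : M → ℝ, Continuous f → Continuous fun p : M × A => ∫ x, f x ∂ η p)
    (β : ℕ → ℝ) (hβ : ∀ k, β k ∈ Set.Ioo (0 : ℝ) 1)
    (hβ1 : Tendsto β atTop (nhds 1))
    (r : ℕ → ℝ) (jstar : ℝ) (hr : Tendsto r atTop (nhds jstar))
    (hk : ℕ → M → ℝ) (hkc : ∀ n, Continuous (hk n))
    (h : M → ℝ) (hhc : Continuous h)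
    (hunif : TendstoUniformly hk h atTop)
    (hbell : ∀ n : ℕ, ∀ m : M,
      hk n m = sInf ((fun a => c (m, a) + β n * ∫ x, hk n x ∂ η (m, a)) '' Act m) - r n) :
    ∀ m : M, h m = sInf ((fun a => c (m, a) + ∫ x, h x ∂ η (m, a)) '' Act m) - jstar := by
  intro m
  -- bound for h
  haveI : Nonempty M := ⟨m⟩
  obtain ⟨x₀, -, hx₀⟩ := isCompact_univ.exists_isMaxOn ⟨m, trivial⟩
    (continuous_abs.comp hhc).continuousOn
  set C : ℝ := |h x₀| with hC
  have hCnn : 0 ≤ C := abs_nonneg _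
  have hhb : ∀ x, |h x| ≤ C := fun x => hx₀ (Set.mem_univ x)
  -- integrability
  have hint : ∀ (f : M → ℝ), Continuous f → ∀ p, Integrable f (η p) := fun f hf p =>
    hf.integrable_of_hasCompactSupport (HasCompactSupport.of_compactSpace _)
  set F : ℕ → A → ℝ := fun n a => c (m, a) + β n * ∫ x, hk n x ∂ η (m, a) with hF
  set G : A → ℝ := fun a => c (m, a) + ∫ x, h x ∂ η (m, a) with hG
  have hGc : Continuous G := by
    apply Continuous.add
    · exact hc.comp (Continuous.prodMk_right m)
    · exact (hη h hhc).comp (Continuous.prodMk_right m)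
  have hFc : ∀ n, Continuous (F n) := by
    intro n
    apply Continuous.add
    · exact hc.comp (Continuous.prodMk_right m)
    · exact (continuous_const.mul ((hη (hk n) (hkc n)).comp (Continuous.prodMk_right m)))
  have hGbd : BddBelow (G '' Act m) := ((hActcpt m).image hGc).bddBelow
  have hFbd : ∀ n, BddBelow (F n '' Act m) := fun n => ((hActcpt m).image (hFc n)).bddBelow
  -- key convergence of infima
  have hInf : Tendsto (fun n => sInf (F n '' Act m)) atTop (nhds (sInf (G '' Act m))) := by
    rw [Metric.tendsto_atTop]
    intro ε hε
    have hε4 : 0 < ε / 4 := by linarith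
    obtain ⟨N₁, hN₁⟩ := (Metric.tendstoUniformly_iff.mp hunif (ε / 4) hε4).exists_forall_of_atTop
    obtain ⟨N₂, hN₂⟩ := Metric.tendsto_atTop.mp hβ1 (ε / (2 * (C + 1))) (by positivity)
    refine ⟨max N₁ N₂, fun n hn => ?_⟩
    have hn1 : N₁ ≤ n := le_trans (le_max_left _ _) hn
    have hn2 : N₂ ≤ n := le_trans (le_max_right _ _) hn
    have key : ∀ a ∈ Act m, |F n a - G a| ≤ 3 * ε / 4 := by
      intro a _
      have hFG : F n a - G a =
          β n * ((∫ x, hk n x ∂ η (m, a)) - ∫ x, h x ∂ η (m, a))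
            + (β n - 1) * ∫ x, h x ∂ η (m, a) := by
        simp only [hF, hG]; ring
      have hi1 : |(∫ x, hk n x ∂ η (m, a)) - ∫ x, h x ∂ η (m, a)| ≤ ε / 4 := by
        rw [← integral_sub (hint _ (hkc n) _) (hint _ hhc _)]
        have := norm_integral_le_of_norm_le_const (μ := η (m, a))
          (f := fun x => hk n x - h x) (C := ε / 4) ?_
        · simpa [measure_univ] using this
        · filter_upwards with x
          have := hN₁ n hn1 x
          rw [Real.dist_eq] at this
          simpa [Real.norm_eq_abs, abs_sub_comm] using this.le
      have hi2 : |∫ x, h x ∂ η (m, a)| ≤ C := by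
        have := norm_integral_le_of_norm_le_const (μ := η (m, a))
          (f := h) (C := C) (Filter.Eventually.of_forall fun x => by
            simpa [Real.norm_eq_abs] using hhb x)
        simpa [measure_univ] using this
      have hβn : |β n| ≤ 1 := by
        have := hβ n; rw [abs_le]; constructor <;> [linarith [this.1]; linarith [this.2]]
      have hβd : |β n - 1| ≤ ε / (2 * (C + 1)) := by
        have := hN₂ n hn2; rw [Real.dist_eq] at this; exact this.le
      calc |F n a - G a|
          ≤ |β n| * |(∫ x, hk n x ∂ η (m, a)) - ∫ x, h x ∂ η (m, a)|
            + |β n - 1| * |∫ x, h x ∂ η (m, a)| := by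
            rw [hFG]; refine (abs_add_le _ _).trans ?_; rw [abs_mul, abs_mul]
        _ ≤ 1 * (ε / 4) + (ε / (2 * (C + 1))) * C := by
            have t1 := mul_le_mul hβn hi1 (abs_nonneg _) (by norm_num : (0:ℝ) ≤ 1)
            have t2 := mul_le_mul hβd hi2 (abs_nonneg _) (by positivity)
            linarith
        _ ≤ 3 * ε / 4 := by
            have hc1 : (ε / (2 * (C + 1))) * C ≤ ε / 2 := by
              rw [div_mul_eq_mul_div, div_le_div_iff₀ (by positivity) (by norm_num)]
              nlinarith
            linarith
    have habs := abs_csInf_sub_csInf_le (hActne m) (hFbd n) hGbd key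
    rw [Real.dist_eq]
    calc |sInf (F n '' Act m) - sInf (G '' Act m)| ≤ 3 * ε / 4 := habs
      _ < ε := by linarith
  have h1 : Tendsto (fun n => hk n m) atTop (nhds (h m)) := hunif.tendsto_at m
  have h2 : Tendsto (fun n => hk n m) atTop (nhds (sInf (G '' Act m) - jstar)) := by
    have : (fun n => hk n m) = fun n => sInf (F n '' Act m) - r n := by
      funext n; exact hbell n m
    rw [this]
    exact hInf.sub hr
  exact tendsto_nhds_unique h1 h2
end
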